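/- Let p₁₂, p₂₃, p₃₁ ≥ 2 be real numbers with p₁₂² + p₂₃² + p₃₁² − p₁₂p₂₃p₃₁ ≤ 4, and let à be the symmetric 3×3 matrix with diagonal entries 2 and off-diagonal entries p₁₂, p₂₃, p₃₁. Then à has exactly one positive eigenvalue λ, the other two eigenvalues are non-positive, and λ > 2 + √(p₁₂² + p₂₃² + p₃₁²). -/

import Mathlib

open Matrix

private lemma amgm3 (x y z : ℝ) (hx : 0 ≤ x) (hy : 0 ≤ y) (hz : 0 ≤ z) :
    27 * (x * y * z) ≤ (x + y + z) ^ 3 := by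
  nlinarith [mul_nonneg hx (sq_nonneg (y - z)), mul_nonneg hy (sq_nonneg (z - x)),
    mul_nonneg hz (sq_nonneg (x - y)),
    mul_nonneg (add_nonneg (add_nonneg hx hy) hz) (sq_nonneg (x - y)),
    mul_nonneg (add_nonneg (add_nonneg hx hy) hz) (sq_nonneg (y - z)),
    mul_nonneg (add_nonneg (add_nonneg hx hy) hz) (sq_nonneg (x - z))]

set_option maxHeartbeats 1000000 in
theorem eigenvalues_of_pseudo_Cartan (p12 p23 p31 : ℝ)
    (h12 : 2 ≤ p12) (h23 : 2 ≤ p23) (h31 : 2 ≤ p31)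
    (hC : p12 ^ 2 + p23 ^ 2 + p31 ^ 2 - p12 * p23 * p31 ≤ 4) :
    ∃ lam nu1 nu2 : ℝ,
      (∀ t : ℝ, (t • (1 : Matrix (Fin 3) (Fin 3) ℝ) -
          !![2, p12, p31; p12, 2, p23; p31, p23, 2]).det =
        (t - lam) * (t - nu1) * (t - nu2)) ∧
      nu1 ≤ 0 ∧ nu2 ≤ 0 ∧ 2 + Real.sqrt (p12 ^ 2 + p23 ^ 2 + p31 ^ 2) < lam := by
  set q : ℝ := p12 ^ 2 + p23 ^ 2 + p31 ^ 2 with hq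
  set r : ℝ := 2 * (p12 * p23 * p31) with hr
  have hq12 : (12:ℝ) ≤ q := by rw [hq]; nlinarith
  have hr16 : (16:ℝ) ≤ r := by rw [hr]; nlinarith
  have hAM : 27 * (p12 * p23 * p31) ^ 2 ≤ q ^ 3 := by
    have h := amgm3 (p12^2) (p23^2) (p31^2) (sq_nonneg _) (sq_nonneg _) (sq_nonneg _)
    calc 27 * (p12 * p23 * p31) ^ 2 = 27 * (p12^2 * p23^2 * p31^2) := by ring
      _ ≤ (p12^2 + p23^2 + p31^2) ^ 3 := h
      _ = q ^ 3 := by rw [hq]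
  have hdet : ∀ t : ℝ, (t • (1 : Matrix (Fin 3) (Fin 3) ℝ) -
      !![2, p12, p31; p12, 2, p23; p31, p23, 2]).det =
      (t - 2) ^ 3 - q * (t - 2) - r := by
    intro t
    have hm : t • (1 : Matrix (Fin 3) (Fin 3) ℝ) - !![2, p12, p31; p12, 2, p23; p31, p23, 2] =
        !![t - 2, -p12, -p31; -p12, t - 2, -p23; -p31, -p23, t - 2] := by
      ext i j
      fin_cases i <;> fin_cases j <;> simp [Matrix.one_apply]
    rw [hm, Matrix.det_fin_three]
    rw [hq, hr]
    norm_num [Matrix.cons_val_zero, Matrix.cons_val_one, Matrix.head_cons, Matrix.cons_val_two, Matrix.vecHead, Matrix.vecTail]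
    ring
  have hCqr : 2 * q - r ≤ 8 := by rw [hq, hr]; linarith
  have hAMr : 27 * r ^ 2 ≤ 4 * q ^ 3 := by
    have : r ^ 2 = 4 * (p12 * p23 * p31) ^ 2 := by rw [hr]; ring
    linarith [hAM, this]
  clear_value q r
  clear hq hr hC
  have hq0 : (0:ℝ) ≤ q := by linarith
  have hsq : Real.sqrt q ^ 2 = q := Real.sq_sqrt hq0
  have hsq0 : (0:ℝ) ≤ Real.sqrt q := Real.sqrt_nonneg q
  have hs3 : Real.sqrt q ^ 3 = q * Real.sqrt q := by
    rw [pow_succ, hsq]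
  have hcont : Continuous fun x : ℝ => x ^ 3 - q * x - r := by continuity
  have h1 : (Real.sqrt q) ^ 3 - q * Real.sqrt q - r < 0 := by rw [hs3]; linarith
  have h2 : 0 < (Real.sqrt q + r) ^ 3 - q * (Real.sqrt q + r) - r := by
    nlinarith [hs3, hsq, hsq0, hq12, hr16, mul_nonneg hsq0 (sq_nonneg r),
      mul_nonneg hq0 (by linarith : (0:ℝ) ≤ r)]
  have hivt := intermediate_value_Icc
    (by linarith : Real.sqrt q ≤ Real.sqrt q + r) hcont.continuousOn
  obtain ⟨a, hamem, ha0⟩ := hivt ⟨le_of_lt h1, le_of_lt h2⟩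
  obtain ⟨haL, haR⟩ := hamem
  simp only at ha0
  have hagt : Real.sqrt q < a :=
    lt_of_le_of_ne haL (by rintro rfl; rw [ha0] at h1; exact lt_irrefl 0 h1)
  have haq : q ≤ a ^ 2 := by nlinarith [hsq]
  have ha4 : (4:ℝ) ≤ a := by nlinarith [ha0, haq, hq12, hr16, hsq0]
  have hD : 3 * a ^ 2 ≤ 4 * q := by
    by_contra h
    push_neg at h
    have h' : q < 3 * a ^ 2 / 4 := by linarith
    have hp : 0 < a * (3 * a ^ 2 / 4 - q) :=
      mul_pos (by linarith : (0:ℝ) < a) (by linarith : (0:ℝ) < 3 * a ^ 2 / 4 - q)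
    have hrgt : a ^ 3 / 4 < r := by nlinarith [ha0, hp]
    have hq3 : q ^ 3 < (3 * a ^ 2 / 4) ^ 3 := pow_lt_pow_left₀ h' hq0 (by norm_num)
    have ha3pos : (0:ℝ) < a ^ 3 / 4 := by positivity
    have hsq' : (a ^ 3 / 4) ^ 2 < r ^ 2 :=
      pow_lt_pow_left₀ hrgt (le_of_lt ha3pos) (by norm_num)
    nlinarith [hAMr, hq3, hsq']
  set sd : ℝ := Real.sqrt (4 * q - 3 * a ^ 2) with hsd
  have hsd0 : 0 ≤ sd := Real.sqrt_nonneg _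
  have hsd2 : sd ^ 2 = 4 * q - 3 * a ^ 2 := Real.sq_sqrt (by linarith)
  have hq2 : q ≤ a ^ 2 - 2 * a + 4 := by nlinarith [ha0, ha4, hCqr]
  have hsdle : sd ≤ a - 4 := by
    rw [hsd]
    calc Real.sqrt (4 * q - 3 * a ^ 2) ≤ Real.sqrt ((a - 4) ^ 2) :=
          Real.sqrt_le_sqrt (by nlinarith)
      _ = a - 4 := Real.sqrt_sq (by linarith)
  refine ⟨2 + a, 2 + (-a - sd) / 2, 2 + (-a + sd) / 2, ?_, by linarith, by linarith, by linarith⟩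
  intro t
  rw [hdet t]
  linear_combination (1 : ℝ) * ha0 + ((t - 2 - a) / 4) * hsd2
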